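/- Suppose there exist 0 < a < c ≤ b and g₀ ∈ (-1/2, 1/2) such that H(x) = diag(1/2 + g₀, 1/2 - g₀) for a.e. x ∈ [a,c]. Then for every compact set K ⊂ ℂ there exists C > 0 such that for all z ∈ K and all λ ∈ ℝ, |∫ₐ^c u(z,x)ᵀ 𝒥 u(λ,x) dx| ≤ C · (∫₀^b u(λ,x)ᵀ H(x) u(λ,x) dx)^{1/2}. -/

import Mathlib

open MeasureTheory Matrix Set

noncomputable section

/-- The symplectic matrix 𝒥 = [[0,-1],[1,0]] over ℝ. -/
def J2 : Matrix (Fin 2) (Fin 2) ℝ := !![0, -1; 1, 0]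

/-- The symplectic matrix 𝒥 = [[0,-1],[1,0]] over ℂ. -/
def J2C : Matrix (Fin 2) (Fin 2) ℂ := !![0, -1; 1, 0]

/-- Complexification of a real 2×2 matrix. -/
def cmat (M : Matrix (Fin 2) (Fin 2) ℝ) : Matrix (Fin 2) (Fin 2) ℂ :=
  M.map Complex.ofReal

open intervalIntegral

lemma aesm_fin2 {μ : Measure ℝ} (f : ℝ → Fin 2 → ℂ)
    (h0 : AEMeasurable (fun x => f x 0) μ) (h1 : AEMeasurable (fun x => f x 1) μ) :
    AEStronglyMeasurable f μ := by
  have : AEMeasurable f μ := by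
    refine ⟨fun x => ![h0.mk _ x, h1.mk _ x], ?_, ?_⟩
    · refine measurable_pi_iff.2 fun i => ?_
      fin_cases i
      · simpa using h0.measurable_mk
      · simpa using h1.measurable_mk
    · filter_upwards [h0.ae_eq_mk, h1.ae_eq_mk] with x e0 e1
      funext i
      fin_cases i
      · simpa using e0
      · simpa using e1
  exact this.aestronglyMeasurable


/-- Core step: if `v y ≤ D` and `∫_y^x h ≤ 1/2`, then `v x ≤ 2 D`. -/
lemma gronwall_step (b : ℝ) (h v : ℝ → ℝ)
    (hint : Integrable h) (hpos : ∀ s, 0 ≤ h s)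
    (hv : ContinuousOn v (Icc 0 b)) (hvnn : ∀ s, 0 ≤ v s)
    (hvint : IntegrableOn (fun r => h r * v r) (Icc 0 b))
    (hineq : ∀ s t : ℝ, 0 ≤ s → s ≤ t → t ≤ b →
      v t ≤ v s + ∫ r in s..t, h r * v r)
    (y x D : ℝ) (hy0 : 0 ≤ y) (hyx : y ≤ x) (hxb : x ≤ b)
    (hD : v y ≤ D) (hhalf : (∫ r in y..x, h r) ≤ 1/2) :
    v x ≤ 2 * D := by
  have hsub : Icc y x ⊆ Icc 0 b := Icc_subset_Icc hy0 hxb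
  obtain ⟨t0, ht0mem, ht0max⟩ :=
    isCompact_Icc.exists_isMaxOn (nonempty_Icc.2 hyx) (hv.mono hsub)
  obtain ⟨ht0y, ht0x⟩ := ht0mem
  have hvt0 : ∀ s ∈ Icc y t0, v s ≤ v t0 := fun s hs =>
    ht0max (Icc_subset_Icc le_rfl ht0x hs)
  have hhint : IntervalIntegrable h volume y t0 := hint.intervalIntegrable
  have hvi : IntervalIntegrable (fun r => h r * v r) volume y t0 :=
    (intervalIntegrable_iff_integrableOn_Icc_of_le ht0y).2 (hvint.mono_set (Icc_subset_Icc hy0 (ht0x.trans hxb)))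
  have hIb : (∫ r in y..t0, h r * v r) ≤ (∫ r in y..t0, h r * v t0) := by
    apply intervalIntegral.integral_mono_on ht0y hvi (hhint.mul_const _)
    intro s hs
    exact mul_le_mul_of_nonneg_left (hvt0 s hs) (hpos s)
  have hI2 : (∫ r in y..t0, h r) ≤ 1/2 := by
    have : (∫ r in y..t0, h r) ≤ ∫ r in y..x, h r := by
      rw [← intervalIntegral.integral_add_adjacent_intervals
        (hint.intervalIntegrable (a := y) (b := t0))
        (hint.intervalIntegrable (a := t0) (b := x))]
      have : 0 ≤ ∫ r in t0..x, h r :=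
        intervalIntegral.integral_nonneg ht0x (fun s _ => hpos s)
      linarith
    linarith
  have key : v t0 ≤ D + v t0 * (1/2) := by
    have h1 := hineq y t0 hy0 ht0y (ht0x.trans hxb)
    have h2 : (∫ r in y..t0, h r * v t0) = (∫ r in y..t0, h r) * v t0 := by
      rw [intervalIntegral.integral_mul_const]
    nlinarith [hvnn t0, hI2, hIb]
  have hvx : v x ≤ v t0 := ht0max (right_mem_Icc.2 hyx)
  linarith

/-- Grönwall-type bound with `L¹` coefficient. -/
lemma gronwall_pow (b : ℝ) (hb : 0 ≤ b) (h v : ℝ → ℝ)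
    (hint : Integrable h) (hpos : ∀ s, 0 ≤ h s)
    (hv : ContinuousOn v (Icc 0 b)) (hvnn : ∀ s, 0 ≤ v s) (hv0 : v 0 ≤ 1)
    (hvint : IntegrableOn (fun r => h r * v r) (Icc 0 b))
    (hineq : ∀ s t : ℝ, 0 ≤ s → s ≤ t → t ≤ b →
      v t ≤ v s + ∫ r in s..t, h r * v r)
    (n : ℕ) (hn : (∫ r in (0:ℝ)..b, h r) ≤ n / 2) :
    ∀ x ∈ Icc 0 b, v x ≤ 2 ^ (n + 1) := by
  set G : ℝ → ℝ := fun x => ∫ r in (0:ℝ)..x, h r with hG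
  have hGcont : Continuous G := hint.continuous_primitive _
  have hGmono : Monotone G := by
    intro s t hst
    have : G t - G s = ∫ r in s..t, h r :=
      intervalIntegral.integral_interval_sub_left hint.intervalIntegrable
        hint.intervalIntegrable
    have h2 : 0 ≤ ∫ r in s..t, h r :=
      intervalIntegral.integral_nonneg hst (fun s _ => hpos s)
    linarith
  have hGsub : ∀ s t : ℝ, (∫ r in s..t, h r) = G t - G s := by
    intro s t
    rw [hG]
    exact (intervalIntegral.integral_interval_sub_left hint.intervalIntegrable
        hint.intervalIntegrable).symm
  -- main induction
  have main : ∀ i : ℕ, ∀ x ∈ Icc 0 b, G x ≤ i / 2 → v x ≤ 2 ^ (i + 1) := by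
    intro i
    induction i with
    | zero =>
      intro x hx hGx
      have := gronwall_step b h v hint hpos hv hvnn hvint hineq 0 x 1
        le_rfl hx.1 hx.2 hv0 (by simpa [hG] using hGx.trans (by norm_num))
      simpa using this
    | succ i ih =>
      intro x hx hGx
      -- y := sSup of the set where G ≤ i/2
      set S : Set ℝ := {s ∈ Icc 0 x | G s ≤ i / 2} with hS
      have hSne : S.Nonempty := ⟨0, ⟨left_mem_Icc.2 hx.1, by simp [hG, intervalIntegral.integral_same]; positivity⟩⟩
      have hSbdd : BddAbove S := BddAbove.mono (fun s hs => hs.1) bddAbove_Icc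
      have hSclosed : IsClosed S := by
        have : S = Icc 0 x ∩ {s | G s ≤ i / 2} := by ext s; simp [hS, and_comm]
        rw [this]
        exact isClosed_Icc.inter (isClosed_le hGcont continuous_const)
      set y : ℝ := sSup S with hy
      have hyS : y ∈ S := hSclosed.csSup_mem hSne hSbdd
      have hy0 : 0 ≤ y := hyS.1.1
      have hyx : y ≤ x := hyS.1.2
      have hvy : v y ≤ 2 ^ (i + 1) := ih y ⟨hy0, hyx.trans hx.2⟩ hyS.2
      -- integral over [y,x] is at most 1/2
      have hGy : i / 2 ≤ G y ∨ y = x := by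
        rcases eq_or_lt_of_le hyx with heq | hlt
        · exact Or.inr heq
        · left
          have hev : ∀ᶠ t in nhdsWithin y (Ioi y), i / 2 ≤ G t := by
            filter_upwards [Ioo_mem_nhdsGT_of_mem (left_mem_Ico.2 hlt)] with t ht
            by_contra hcon
            push_neg at hcon
            have htS : t ∈ S := ⟨⟨hy0.trans ht.1.le, ht.2.le⟩, hcon.le⟩
            exact absurd (le_csSup hSbdd htS) (not_le.2 ht.1)
          exact ge_of_tendsto ((hGcont.tendsto y).mono_left nhdsWithin_le_nhds) hev
      have hhalf : (∫ r in y..x, h r) ≤ 1 / 2 := by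
        rw [hGsub]
        rcases hGy with hGy | hGy
        · push_cast at hGx ⊢
          linarith
        · simp [hGy]
      have := gronwall_step b h v hint hpos hv hvnn hvint hineq y x (2 ^ (i + 1))
        hy0 hyx hx.2 hvy hhalf
      calc v x ≤ 2 * 2 ^ (i + 1) := this
        _ = 2 ^ (i + 1 + 1) := by ring
  intro x hx
  exact main n x hx (by rw [hG] at *; exact hGmono hx.2 |>.trans hn)

/-- Uniform bound for solutions over a compact set of spectral parameters. -/
lemma unif_bound (b : ℝ) (hb : 0 < b)
    (H : ℝ → Matrix (Fin 2) (Fin 2) ℝ)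
    (hHint : ∀ i j, IntegrableOn (fun x => H x i j) (Icc 0 b))
    (u : ℂ → ℝ → Fin 2 → ℂ)
    (hucont : ∀ z, ContinuousOn (u z) (Icc 0 b))
    (hueq : ∀ z, ∀ x ∈ Icc 0 b,
      u z x = ![1, 0] + z • ∫ s in (0:ℝ)..x, (J2C * cmat (H s)) *ᵥ u z s)
    (K : Set ℂ) (hK : IsCompact K) :
    ∃ B : ℝ, 1 ≤ B ∧ ∀ z ∈ K, ∀ x ∈ Icc 0 b, ‖u z x‖ ≤ B := by
  -- a bound on K
  obtain ⟨R₀, hR₀⟩ := hK.isBounded.exists_norm_le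
  set R : ℝ := max R₀ 0 with hR
  have hRK : ∀ z ∈ K, ‖z‖ ≤ R := fun z hz => (hR₀ z hz).trans (le_max_left _ _)
  have hR0 : 0 ≤ R := le_max_right _ _
  -- the L¹ coefficient
  set h₀ : ℝ → ℝ := fun s => |H s 0 0| + |H s 0 1| + |H s 1 0| + |H s 1 1| with hh₀
  have hh₀nn : ∀ s, 0 ≤ h₀ s := fun s => by positivity
  have hh₀int : IntegrableOn h₀ (Icc 0 b) := by
    exact (((hHint 0 0).abs.add (hHint 0 1).abs).add (hHint 1 0).abs).add (hHint 1 1).abs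
  set h : ℝ → ℝ := (Icc (0:ℝ) b).indicator (fun s => (R + 1) * h₀ s) with hh
  have hhint : Integrable h := by
    rw [hh, integrable_indicator_iff measurableSet_Icc]
    exact hh₀int.const_mul _
  have hhnn : ∀ s, 0 ≤ h s := by
    intro s
    rw [hh]
    exact indicator_nonneg (fun s _ => by positivity) s
  have hheq : ∀ s ∈ Icc 0 b, h s = (R + 1) * h₀ s := fun s hs => indicator_of_mem hs _
  set n : ℕ := ⌈2 * ∫ r in (0:ℝ)..b, h r⌉₊ with hn
  refine ⟨2 ^ (n + 1), one_le_pow₀ (by norm_num), ?_⟩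
  intro z hz
  set v : ℝ → ℝ := fun x => ‖u z x‖ with hv
  have hvcont : ContinuousOn v (Icc 0 b) := (hucont z).norm
  have hvnn : ∀ s, 0 ≤ v s := fun s => norm_nonneg _
  obtain ⟨Mv, hMv⟩ := isCompact_Icc.exists_bound_of_continuousOn (hucont z)
  set f : ℝ → Fin 2 → ℂ := fun s => (J2C * cmat (H s)) *ᵥ u z s with hf
  -- pointwise bound on f
  have hfb : ∀ s, ‖f s‖ ≤ h₀ s * v s := by
    intro s
    have hb0 : ‖u z s 0‖ ≤ v s := norm_le_pi_norm (u z s) 0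
    have hb1 : ‖u z s 1‖ ≤ v s := norm_le_pi_norm (u z s) 1
    have e0 : f s 0 = -((H s 1 0 : ℂ) * u z s 0) - (H s 1 1 : ℂ) * u z s 1 := by
      simp [hf, J2C, cmat, Matrix.mulVec, Matrix.vecMul, Matrix.mul_apply, dotProduct,
        Fin.sum_univ_two, Matrix.map_apply]
      ring
    have e1 : f s 1 = (H s 0 0 : ℂ) * u z s 0 + (H s 0 1 : ℂ) * u z s 1 := by
      simp [hf, J2C, cmat, Matrix.mulVec, Matrix.vecMul, Matrix.mul_apply, dotProduct,
        Fin.sum_univ_two, Matrix.map_apply]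
    have n1 := abs_nonneg (H s 0 0); have n2 := abs_nonneg (H s 0 1)
    have n3 := abs_nonneg (H s 1 0); have n4 := abs_nonneg (H s 1 1)
    have hvs := hvnn s
    have k1 := mul_le_mul_of_nonneg_left hb0 n1
    have k2 := mul_le_mul_of_nonneg_left hb1 n2
    have k3 := mul_le_mul_of_nonneg_left hb0 n3
    have k4 := mul_le_mul_of_nonneg_left hb1 n4
    rw [pi_norm_le_iff_of_nonneg (by positivity)]
    intro i
    fin_cases i
    · show ‖f s 0‖ ≤ h₀ s * v s
      calc ‖f s 0‖ = ‖-((H s 1 0 : ℂ) * u z s 0) - (H s 1 1 : ℂ) * u z s 1‖ := by rw [e0]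
        _ ≤ ‖(H s 1 0 : ℂ) * u z s 0‖ + ‖(H s 1 1 : ℂ) * u z s 1‖ := by
            refine (norm_sub_le _ _).trans ?_
            rw [norm_neg]
        _ ≤ h₀ s * v s := by
            rw [norm_mul, norm_mul, Complex.norm_real, Complex.norm_real,
              Real.norm_eq_abs, Real.norm_eq_abs]
            simp only [hh₀]
            nlinarith
    · show ‖f s 1‖ ≤ h₀ s * v s
      calc ‖f s 1‖ ≤ ‖(H s 0 0 : ℂ) * u z s 0‖ + ‖(H s 0 1 : ℂ) * u z s 1‖ := by
            rw [e1]; exact norm_add_le _ _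
        _ ≤ h₀ s * v s := by
            rw [norm_mul, norm_mul, Complex.norm_real, Complex.norm_real,
              Real.norm_eq_abs, Real.norm_eq_abs]
            simp only [hh₀]
            nlinarith
  -- measurability of components of u z
  have humeas : ∀ j : Fin 2, AEMeasurable (fun s => u z s j) (volume.restrict (Icc 0 b)) := by
    intro j
    exact (((continuous_apply j).comp_continuousOn
      (hucont z)).aestronglyMeasurable measurableSet_Icc).aemeasurable
  have hHmeas : ∀ i j : Fin 2,
      AEMeasurable (fun s => (H s i j : ℂ)) (volume.restrict (Icc 0 b)) := by
    intro i j
    exact Complex.measurable_ofReal.comp_aemeasurable (hHint i j).aemeasurable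
  have hfm : AEStronglyMeasurable f (volume.restrict (Icc 0 b)) := by
    apply aesm_fin2
    · have e : (fun s => f s 0) =
          fun s => -((H s 1 0 : ℂ) * u z s 0) - (H s 1 1 : ℂ) * u z s 1 := by
        funext s
        simp [hf, J2C, cmat, Matrix.mulVec, Matrix.vecMul, Matrix.mul_apply, dotProduct,
          Fin.sum_univ_two, Matrix.map_apply]
        ring
      rw [e]
      exact (((hHmeas 1 0).mul (humeas 0)).neg).sub ((hHmeas 1 1).mul (humeas 1))
    · have e : (fun s => f s 1) =
          fun s => (H s 0 0 : ℂ) * u z s 0 + (H s 0 1 : ℂ) * u z s 1 := by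
        funext s
        simp [hf, J2C, cmat, Matrix.mulVec, Matrix.vecMul, Matrix.mul_apply, dotProduct,
          Fin.sum_univ_two, Matrix.map_apply]
      rw [e]
      exact ((hHmeas 0 0).mul (humeas 0)).add ((hHmeas 0 1).mul (humeas 1))
  have hMv0 : 0 ≤ Mv := (norm_nonneg _).trans (hMv 0 ⟨le_rfl, hb.le⟩)
  have hfint : IntegrableOn f (Icc 0 b) := by
    refine Integrable.mono' (hh₀int.mul_const Mv) hfm ?_
    filter_upwards [ae_restrict_mem measurableSet_Icc] with s hs
    exact (hfb s).trans (mul_le_mul_of_nonneg_left (hMv s hs) (hh₀nn s))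
  have hfii : ∀ x ∈ Icc (0:ℝ) b, IntervalIntegrable f volume 0 x := by
    intro x hx
    exact (intervalIntegrable_iff_integrableOn_Icc_of_le hx.1).2
      (hfint.mono_set (Icc_subset_Icc le_rfl hx.2))
  -- value at 0
  have hv0 : v 0 ≤ 1 := by
    have h0 := hueq z 0 ⟨le_rfl, hb.le⟩
    rw [intervalIntegral.integral_same, smul_zero, add_zero] at h0
    rw [hv]
    simp only [h0]
    rw [pi_norm_le_iff_of_nonneg zero_le_one]
    intro i
    fin_cases i <;> simp
  -- integrability of h * v
  have hvint : IntegrableOn (fun r => h r * v r) (Icc 0 b) := by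
    refine Integrable.mono' (hhint.restrict.mul_const Mv)
      (hhint.1.restrict.mul ((hvcont).aestronglyMeasurable measurableSet_Icc)) ?_
    filter_upwards [ae_restrict_mem measurableSet_Icc] with s hs
    rw [Real.norm_eq_abs, abs_mul, abs_of_nonneg (hhnn s), abs_of_nonneg (hvnn s)]
    exact mul_le_mul_of_nonneg_left (hMv s hs) (hhnn s)
  -- the integral inequality
  have hineq : ∀ s t : ℝ, 0 ≤ s → s ≤ t → t ≤ b →
      v t ≤ v s + ∫ r in s..t, h r * v r := by
    intro s t hs hst htb
    have hsI : s ∈ Icc (0:ℝ) b := ⟨hs, hst.trans htb⟩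
    have htI : t ∈ Icc (0:ℝ) b := ⟨hs.trans hst, htb⟩
    have hsub : u z t - u z s = z • ∫ r in s..t, f r := by
      rw [hueq z t htI, hueq z s hsI,
        ← intervalIntegral.integral_interval_sub_left (hfii t htI) (hfii s hsI)]
      rw [add_sub_add_left_eq_sub, ← smul_sub]
    have hfiist : IntervalIntegrable f volume s t :=
      (intervalIntegrable_iff_integrableOn_Icc_of_le hst).2
        (hfint.mono_set (Icc_subset_Icc hs htb))
    have hnormint : IntervalIntegrable (fun r => ‖f r‖) volume s t := hfiist.norm
    have h1 : ‖u z t - u z s‖ ≤ R * ∫ r in s..t, ‖f r‖ := by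
      rw [hsub, norm_smul]
      have h2 : ‖∫ r in s..t, f r‖ ≤ ∫ r in s..t, ‖f r‖ :=
        intervalIntegral.norm_integral_le_integral_norm hst
      have h3 : (0:ℝ) ≤ ∫ r in s..t, ‖f r‖ :=
        intervalIntegral.integral_nonneg hst (fun r _ => norm_nonneg _)
      have h4 : ‖z‖ * ‖∫ r in s..t, f r‖ ≤ ‖z‖ * ∫ r in s..t, ‖f r‖ :=
        mul_le_mul_of_nonneg_left h2 (norm_nonneg z)
      nlinarith [hRK z hz, norm_nonneg (∫ r in s..t, f r)]
    have h5 : R * (∫ r in s..t, ‖f r‖) = ∫ r in s..t, R * ‖f r‖ := by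
      rw [intervalIntegral.integral_const_mul]
    have hvii : IntervalIntegrable (fun r => h r * v r) volume s t :=
      (intervalIntegrable_iff_integrableOn_Icc_of_le hst).2
        (hvint.mono_set (Icc_subset_Icc hs htb))
    have h6 : (∫ r in s..t, R * ‖f r‖) ≤ ∫ r in s..t, h r * v r := by
      refine intervalIntegral.integral_mono_on hst (hnormint.const_mul R) hvii ?_
      intro r hr
      have hrI : r ∈ Icc (0:ℝ) b := ⟨hs.trans hr.1, hr.2.trans htb⟩
      rw [hheq r hrI]
      have := hfb r
      nlinarith [hh₀nn r, hvnn r, norm_nonneg (f r), mul_nonneg (hh₀nn r) (hvnn r)]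
    have htri : v t ≤ v s + ‖u z t - u z s‖ := by
      have := norm_sub_norm_le (u z t) (u z s)
      simp only [hv]
      linarith
    linarith
  have hn2 : (∫ r in (0:ℝ)..b, h r) ≤ (n : ℝ) / 2 := by
    have := Nat.le_ceil (2 * ∫ r in (0:ℝ)..b, h r)
    rw [← hn] at this
    linarith
  exact gronwall_pow b hb.le h v hhint hhnn hvcont hvnn hv0 hvint hineq n hn2

set_option maxHeartbeats 2000000 in
theorem pairing_bound_constant_case
    (b : ℝ) (hb : 0 < b)
    (H : ℝ → Matrix (Fin 2) (Fin 2) ℝ)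
    (hHint : ∀ i j, IntegrableOn (fun x => H x i j) (Icc 0 b))
    (hH : ∀ᵐ x ∂volume, x ∈ Ioo 0 b → (H x).PosSemidef ∧ (H x).trace = 1)
    (u : ℂ → ℝ → Fin 2 → ℂ)
    (hucont : ∀ z, ContinuousOn (u z) (Icc 0 b))
    (hueq : ∀ z, ∀ x ∈ Icc 0 b,
      u z x = ![1, 0] + z • ∫ s in (0:ℝ)..x, (J2C * cmat (H s)) *ᵥ u z s)
    (hureal : ∀ (t : ℝ), ∀ x ∈ Icc (0:ℝ) b, ∀ i, (u (t : ℂ) x i).im = 0)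
    (a c g0 : ℝ) (ha : 0 < a) (hac : a < c) (hcb : c ≤ b)
    (hg0 : g0 ∈ Set.Ioo (-(1/2) : ℝ) (1/2))
    (hHconst : ∀ᵐ x ∂volume, x ∈ Icc a c → H x = !![1/2 + g0, 0; 0, 1/2 - g0]) :
    ∀ K : Set ℂ, IsCompact K → ∃ C > 0, ∀ z ∈ K, ∀ lam : ℝ,
      ‖(∫ x in a..c, u z x ⬝ᵥ (J2C *ᵥ u (lam : ℂ) x))‖
        ≤ C * Real.sqrt
            (∫ x in (0:ℝ)..b, u (lam : ℂ) x ⬝ᵥ (cmat (H x) *ᵥ u (lam : ℂ) x)).re := by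
  intro K hK
  obtain ⟨B, hB1, hB⟩ := unif_bound b hb H hHint u hucont hueq K hK
  have hB0 : 0 < B := lt_of_lt_of_le one_pos hB1
  set m : ℝ := min (1/2 + g0) (1/2 - g0) with hm
  have hm0 : 0 < m := by
    rcases hg0 with ⟨h1, h2⟩
    rw [hm, lt_min_iff]
    constructor <;> linarith
  have hca : 0 < c - a := by linarith
  refine ⟨B * Real.sqrt (2 * (c - a) / m) + 1, by positivity, ?_⟩
  intro z hz lam
  have hzB := hB z hz
  -- the real solution
  set w : ℝ → Fin 2 → ℝ := fun x i => (u (lam:ℂ) x i).re with hw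
  have hwre : ∀ x ∈ Icc (0:ℝ) b, ∀ i, u (lam:ℂ) x i = ((w x i : ℝ) : ℂ) := by
    intro x hx i
    apply Complex.ext
    · simp [hw]
    · simp [hureal lam x hx i]
  have hwcont : ∀ i, ContinuousOn (fun x => w x i) (Icc 0 b) := fun i =>
    Complex.continuous_re.comp_continuousOn
      ((continuous_apply i).comp_continuousOn (hucont (lam:ℂ)))
  have hsubac : Icc a c ⊆ Icc (0:ℝ) b := Icc_subset_Icc ha.le hcb
  -- the real quadratic form
  set p : ℝ → ℝ := fun x => w x 0 * (H x 0 0 * w x 0 + H x 0 1 * w x 1)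
      + w x 1 * (H x 1 0 * w x 0 + H x 1 1 * w x 1) with hp
  have hpq : ∀ x, p x = w x ⬝ᵥ (H x) *ᵥ (w x) := by
    intro x
    simp only [hp, dotProduct, Matrix.mulVec, Fin.sum_univ_two]
  -- rewrite the energy integral
  have hQeq : (∫ x in (0:ℝ)..b, u (lam:ℂ) x ⬝ᵥ (cmat (H x) *ᵥ u (lam:ℂ) x)).re
      = ∫ x in (0:ℝ)..b, p x := by
    have he : (∫ x in (0:ℝ)..b, u (lam:ℂ) x ⬝ᵥ (cmat (H x) *ᵥ u (lam:ℂ) x))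
        = ∫ x in (0:ℝ)..b, ((p x : ℝ) : ℂ) := by
      apply intervalIntegral.integral_congr
      intro x hx
      rw [uIcc_of_le hb.le] at hx
      have h0 := hwre x hx 0
      have h1 := hwre x hx 1
      simp only [dotProduct, Matrix.mulVec, cmat, Matrix.map_apply, Fin.sum_univ_two,
        h0, h1, hp]
      push_cast
      ring
    rw [he, intervalIntegral.integral_ofReal, Complex.ofReal_re]
  rw [hQeq]
  set Q : ℝ := ∫ x in (0:ℝ)..b, p x with hQ
  -- integrability of p
  set h₀ : ℝ → ℝ := fun s => |H s 0 0| + |H s 0 1| + |H s 1 0| + |H s 1 1| with hh₀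
  have hh₀int : IntegrableOn h₀ (Icc 0 b) :=
    (((hHint 0 0).abs.add (hHint 0 1).abs).add (hHint 1 0).abs).add (hHint 1 1).abs
  obtain ⟨Mu, hMu⟩ := isCompact_Icc.exists_bound_of_continuousOn (hucont (lam:ℂ))
  have hMu0 : 0 ≤ Mu := (norm_nonneg _).trans (hMu 0 ⟨le_rfl, hb.le⟩)
  have hwb : ∀ x ∈ Icc (0:ℝ) b, ∀ i, |w x i| ≤ Mu := by
    intro x hx i
    have : |w x i| ≤ ‖u (lam:ℂ) x i‖ := by
      rw [hwre x hx i, Complex.norm_real, Real.norm_eq_abs]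
    exact this.trans ((norm_le_pi_norm _ i).trans (hMu x hx))
  have hwm : ∀ i : Fin 2, AEMeasurable (fun x => w x i) (volume.restrict (Icc 0 b)) :=
    fun i => ((hwcont i).aestronglyMeasurable measurableSet_Icc).aemeasurable
  have hHm : ∀ i j : Fin 2, AEMeasurable (fun x => H x i j) (volume.restrict (Icc 0 b)) :=
    fun i j => (hHint i j).aemeasurable
  have hpint : IntegrableOn p (Icc 0 b) := by
    refine Integrable.mono' (hh₀int.mul_const (Mu * Mu)) ?_ ?_
    · refine (AEMeasurable.aestronglyMeasurable ?_)
      simp only [hp]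
      exact ((hwm 0).mul (((hHm 0 0).mul (hwm 0)).add ((hHm 0 1).mul (hwm 1)))).add
        ((hwm 1).mul (((hHm 1 0).mul (hwm 0)).add ((hHm 1 1).mul (hwm 1))))
    · filter_upwards [ae_restrict_mem measurableSet_Icc] with x hx
      have b0 := hwb x hx 0
      have b1 := hwb x hx 1
      have a0 : 0 ≤ |w x 0| := abs_nonneg _
      have a1 : 0 ≤ |w x 1| := abs_nonneg _
      rw [Real.norm_eq_abs]
      simp only [hp, hh₀]
      have e1 : |w x 0 * (H x 0 0 * w x 0 + H x 0 1 * w x 1)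
          + w x 1 * (H x 1 0 * w x 0 + H x 1 1 * w x 1)|
          ≤ |H x 0 0| * (|w x 0| * |w x 0|) + |H x 0 1| * (|w x 0| * |w x 1|)
            + |H x 1 0| * (|w x 1| * |w x 0|) + |H x 1 1| * (|w x 1| * |w x 1|) := by
        calc _ ≤ |w x 0 * (H x 0 0 * w x 0 + H x 0 1 * w x 1)|
              + |w x 1 * (H x 1 0 * w x 0 + H x 1 1 * w x 1)| := abs_add_le _ _
          _ ≤ _ := by
            rw [abs_mul, abs_mul]
            have c0 := abs_add_le (H x 0 0 * w x 0) (H x 0 1 * w x 1)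
            have c1 := abs_add_le (H x 1 0 * w x 0) (H x 1 1 * w x 1)
            rw [abs_mul, abs_mul] at c0 c1
            nlinarith [abs_nonneg (H x 0 0), abs_nonneg (H x 0 1), abs_nonneg (H x 1 0),
              abs_nonneg (H x 1 1), abs_nonneg (w x 0), abs_nonneg (w x 1)]
      refine e1.trans ?_
      nlinarith [abs_nonneg (H x 0 0), abs_nonneg (H x 0 1), abs_nonneg (H x 1 0),
        abs_nonneg (H x 1 1), mul_le_mul b0 b0 a0 hMu0, mul_le_mul b0 b1 a1 hMu0,
        mul_le_mul b1 b0 a0 hMu0, mul_le_mul b1 b1 a1 hMu0]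
  -- a.e. nonnegativity of p on (0,b]
  have hpnn : ∀ᵐ x ∂volume, x ∈ Ioc 0 b → 0 ≤ p x := by
    have hne : ∀ᵐ x : ℝ ∂volume, x ≠ b := by
      rw [ae_iff]
      have : {x : ℝ | ¬x ≠ b} = {b} := by ext x; simp
      rw [this]
      exact measure_singleton b
    filter_upwards [hH, hne] with x hx hxb hmem
    have hxo : x ∈ Ioo 0 b := ⟨hmem.1, lt_of_le_of_ne hmem.2 hxb⟩
    have hps := (hx hxo).1
    have := hps.dotProduct_mulVec_nonneg (w x)
    rw [hpq]
    simpa using this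
  have hpnn' : 0 ≤ᵐ[volume.restrict (Ioc 0 b)] p :=
    (ae_restrict_iff' measurableSet_Ioc).2 hpnn
  -- I : squared L² norm of w on (a,c]
  set I : ℝ := ∫ x in a..c, (w x 0 ^ 2 + w x 1 ^ 2) with hI
  have hwsqcont : ContinuousOn (fun x => w x 0 ^ 2 + w x 1 ^ 2) (Icc a c) :=
    (((hwcont 0).mono hsubac).pow 2).add (((hwcont 1).mono hsubac).pow 2)
  have hwsqint : IntervalIntegrable (fun x => w x 0 ^ 2 + w x 1 ^ 2) volume a c :=
    hwsqcont.intervalIntegrable_of_Icc hac.le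
  have hI0 : 0 ≤ I :=
    intervalIntegral.integral_nonneg hac.le (fun x _ => by positivity)
  -- lower bound : m * I ≤ Q
  have hmIQ : m * I ≤ Q := by
    have hIset : I = ∫ x in Ioc a c, (w x 0 ^ 2 + w x 1 ^ 2) :=
      intervalIntegral.integral_of_le hac.le
    have hQset : Q = ∫ x in Ioc 0 b, p x := intervalIntegral.integral_of_le hb.le
    have hsub2 : Ioc a c ⊆ Icc (0:ℝ) b := (Ioc_subset_Icc_self).trans hsubac
    have hpintac : IntegrableOn p (Ioc a c) := hpint.mono_set hsub2
    have step1 : m * I ≤ ∫ x in Ioc a c, p x := by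
      rw [hIset, ← MeasureTheory.integral_const_mul]
      refine setIntegral_mono_ae_restrict ((hwsqint.1).const_mul m) hpintac ?_
      · refine (ae_restrict_iff' measurableSet_Ioc).2 ?_
        filter_upwards [hHconst] with x hx hmem
        have hx2 := hx (Ioc_subset_Icc_self hmem)
        have e0 : H x 0 0 = 1/2 + g0 := by rw [hx2]; simp
        have e1 : H x 0 1 = 0 := by rw [hx2]; simp
        have e2 : H x 1 0 = 0 := by rw [hx2]; simp
        have e3 : H x 1 1 = 1/2 - g0 := by rw [hx2]; simp
        simp only [hp, e0, e1, e2, e3]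
        have hm1 : m ≤ 1/2 + g0 := min_le_left _ _
        have hm2 : m ≤ 1/2 - g0 := min_le_right _ _
        nlinarith [sq_nonneg (w x 0), sq_nonneg (w x 1)]
    have step2 : (∫ x in Ioc a c, p x) ≤ ∫ x in Ioc 0 b, p x := by
      refine setIntegral_mono_set (hpint.mono_set Ioc_subset_Icc_self) hpnn' ?_
      exact HasSubset.Subset.eventuallyLE (Ioc_subset_Ioc ha.le hcb)
    rw [hQset]
    exact step1.trans step2
  have hQ0 : 0 ≤ Q := by
    rw [hQ, intervalIntegral.integral_of_le hb.le]
    exact integral_nonneg_of_ae hpnn'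
  -- upper bound for the pairing
  set S : ℝ := ∫ x in a..c, (|w x 0| + |w x 1|) with hS
  have hScont : ContinuousOn (fun x => |w x 0| + |w x 1|) (Icc a c) :=
    ((hwcont 0).mono hsubac).abs.add ((hwcont 1).mono hsubac).abs
  have hSint : IntervalIntegrable (fun x => |w x 0| + |w x 1|) volume a c :=
    hScont.intervalIntegrable_of_Icc hac.le
  have hS0 : 0 ≤ S :=
    intervalIntegral.integral_nonneg hac.le (fun x _ => by positivity)
  -- the pairing is controlled by B * S
  have hFeq : ∀ x, u z x ⬝ᵥ (J2C *ᵥ u (lam:ℂ) x)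
      = u z x 0 * (-(u (lam:ℂ) x 1)) + u z x 1 * u (lam:ℂ) x 0 := by
    intro x
    simp [dotProduct, Matrix.mulVec, J2C, Fin.sum_univ_two]
  have hFcont : ContinuousOn (fun x => u z x ⬝ᵥ (J2C *ᵥ u (lam:ℂ) x)) (Icc a c) := by
    have : ContinuousOn (fun x => u z x 0 * (-(u (lam:ℂ) x 1)) + u z x 1 * u (lam:ℂ) x 0)
        (Icc a c) := by
      have c00 := ((continuous_apply (0:Fin 2)).comp_continuousOn (hucont z)).mono hsubac
      have c01 := ((continuous_apply (1:Fin 2)).comp_continuousOn (hucont z)).mono hsubac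
      have c10 := ((continuous_apply (0:Fin 2)).comp_continuousOn (hucont (lam:ℂ))).mono hsubac
      have c11 := ((continuous_apply (1:Fin 2)).comp_continuousOn (hucont (lam:ℂ))).mono hsubac
      exact (c00.mul c11.neg).add (c01.mul c10)
    simpa only [← hFeq] using this
  have hFint : IntervalIntegrable (fun x => u z x ⬝ᵥ (J2C *ᵥ u (lam:ℂ) x)) volume a c :=
    hFcont.intervalIntegrable_of_Icc hac.le
  have hFb : ∀ x ∈ Icc a c, ‖u z x ⬝ᵥ (J2C *ᵥ u (lam:ℂ) x)‖ ≤ B * (|w x 0| + |w x 1|) := by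
    intro x hx
    have hx2 := hsubac hx
    rw [hFeq]
    have k0 : ‖u z x 0‖ ≤ B := (norm_le_pi_norm _ 0).trans (hzB x hx2)
    have k1 : ‖u z x 1‖ ≤ B := (norm_le_pi_norm _ 1).trans (hzB x hx2)
    have l0 : ‖u (lam:ℂ) x 0‖ = |w x 0| := by
      rw [hwre x hx2 0, Complex.norm_real, Real.norm_eq_abs]
    have l1 : ‖u (lam:ℂ) x 1‖ = |w x 1| := by
      rw [hwre x hx2 1, Complex.norm_real, Real.norm_eq_abs]
    calc ‖u z x 0 * (-(u (lam:ℂ) x 1)) + u z x 1 * u (lam:ℂ) x 0‖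
        ≤ ‖u z x 0‖ * ‖u (lam:ℂ) x 1‖ + ‖u z x 1‖ * ‖u (lam:ℂ) x 0‖ := by
          refine (norm_add_le _ _).trans ?_
          rw [norm_mul, norm_mul, norm_neg]
      _ ≤ B * (|w x 0| + |w x 1|) := by
          rw [l0, l1]
          nlinarith [norm_nonneg (u z x 0), norm_nonneg (u z x 1),
            abs_nonneg (w x 0), abs_nonneg (w x 1)]
  have hchain1 : ‖∫ x in a..c, u z x ⬝ᵥ (J2C *ᵥ u (lam:ℂ) x)‖ ≤ B * S := by
    refine (intervalIntegral.norm_integral_le_integral_norm hac.le).trans ?_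
    have : (∫ x in a..c, ‖u z x ⬝ᵥ (J2C *ᵥ u (lam:ℂ) x)‖)
        ≤ ∫ x in a..c, B * (|w x 0| + |w x 1|) := by
      refine intervalIntegral.integral_mono_on hac.le hFint.norm (hSint.const_mul B) ?_
      exact hFb
    refine this.trans ?_
    rw [intervalIntegral.integral_const_mul]
  -- Cauchy–Schwarz via the elementary inequality
  have htS : ∀ t : ℝ, 0 < t → S ≤ t / 2 * I + (c - a) / t := by
    intro t ht
    have hpoint : ∀ x ∈ Icc a c,
        |w x 0| + |w x 1| ≤ t / 2 * (w x 0 ^ 2 + w x 1 ^ 2) + 1 / t := by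
      intro x _
      have s0 := sq_nonneg (t * |w x 0| - 1)
      have s1 := sq_nonneg (t * |w x 1| - 1)
      have q0 : |w x 0| ^ 2 = w x 0 ^ 2 := sq_abs _
      have q1 : |w x 1| ^ 2 = w x 1 ^ 2 := sq_abs _
      have goal2 : |w x 0| + |w x 1|
          ≤ (t ^ 2 * (w x 0 ^ 2 + w x 1 ^ 2) + 2) / (2 * t) := by
        rw [le_div_iff₀ (by positivity)]
        nlinarith
      refine goal2.trans (le_of_eq ?_)
      field_simp
    have : S ≤ ∫ x in a..c, (t / 2 * (w x 0 ^ 2 + w x 1 ^ 2) + 1 / t) := by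
      refine intervalIntegral.integral_mono_on hac.le hSint
        ((hwsqint.const_mul (t/2)).add intervalIntegrable_const) hpoint
    refine this.trans ?_
    rw [intervalIntegral.integral_add (hwsqint.const_mul (t/2)) intervalIntegrable_const,
      intervalIntegral.integral_const_mul, intervalIntegral.integral_const,
      smul_eq_mul]
    rw [← hI]
    ring_nf
    rfl
  have hSsqrt : S ≤ Real.sqrt (2 * (c - a) * I) := by
    rcases eq_or_lt_of_le hS0 with hS0' | hSpos
    · rw [← hS0']
      positivity
    · have hIpos : 0 < I := by
        rcases eq_or_lt_of_le hI0 with hI0' | h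
        · exfalso
          have hne1 : S ≠ 0 := ne_of_gt hSpos
          have hne2 : (c - a) ≠ 0 := ne_of_gt hca
          have h5 := htS (2 * (c - a) / S) (by positivity)
          rw [← hI0'] at h5
          have h2 : (c - a) / (2 * (c - a) / S) = S / 2 := by field_simp
          rw [h2, mul_zero, zero_add] at h5
          linarith
        · exact h
      have hne1 : S ≠ 0 := ne_of_gt hSpos
      have hne2 : (c - a) ≠ 0 := ne_of_gt hca
      have hne3 : I ≠ 0 := ne_of_gt hIpos
      have key := htS (S / I) (by positivity)
      have e5 : S / I / 2 * I = S / 2 := by field_simp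
      have e6 : (c - a) / (S / I) = (c - a) * I / S := by field_simp
      rw [e5, e6] at key
      have h7 : S / 2 * S ≤ (c - a) * I :=
        (le_div_iff₀ hSpos).1 (by linarith : S / 2 ≤ (c - a) * I / S)
      have hsq : S ^ 2 ≤ 2 * (c - a) * I := by nlinarith
      exact Real.le_sqrt_of_sq_le hsq
  -- put everything together
  have hIQ : 2 * (c - a) * I ≤ 2 * (c - a) / m * Q := by
    rw [div_mul_eq_mul_div, le_div_iff₀ hm0]
    nlinarith
  have hfinal : Real.sqrt (2 * (c - a) * I)
      ≤ Real.sqrt (2 * (c - a) / m) * Real.sqrt Q := by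
    rw [← Real.sqrt_mul (by positivity)]
    exact Real.sqrt_le_sqrt hIQ
  have hsq0 : 0 ≤ Real.sqrt Q := Real.sqrt_nonneg _
  calc ‖∫ x in a..c, u z x ⬝ᵥ (J2C *ᵥ u (lam:ℂ) x)‖ ≤ B * S := hchain1
    _ ≤ B * (Real.sqrt (2 * (c - a) / m) * Real.sqrt Q) :=
        mul_le_mul_of_nonneg_left (hSsqrt.trans hfinal) hB0.le
    _ ≤ (B * Real.sqrt (2 * (c - a) / m) + 1) * Real.sqrt Q := by nlinarith
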